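/- arXiv:2302.04624 — 5 statements merged into one kernel-verified Lean document; each statement's English description precedes it below -/
import Mathlib

section
/- For every graph G, the tree-width of G satisfies tw(G) ≤ 5·ecrw(G) − 1. -/
open SimpleGraph

universe u

/-- A tree-cut decomposition of a graph `G`: a finite tree `T` together with
pairwise disjoint (possibly empty) bags covering the vertex set of `G`. -/
structure TreeCutDecomp {V : Type u} (G : SimpleGraph V) where
  β : Type
  fintypeβ : Fintype β
  T : SimpleGraph β
  isTree : T.IsTree
  bag : β → Set V
  disj : Pairwise fun s t => Disjoint (bag s) (bag t)
  covers : ∀ v : V, ∃ t, v ∈ bag t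

namespace TreeCutDecomp

variable {V : Type u} {G : SimpleGraph V}

/-- The edge `e` of `G` crosses the bag at node `t`: its endpoints lie in bag-unions of
two distinct components of `T - t`. -/
def Crosses (D : TreeCutDecomp G) (t : D.β) (e : Sym2 V) : Prop :=
  e ∈ G.edgeSet ∧ ∃ (u v : V) (s₁ s₂ : D.β) (h₁ : s₁ ≠ t) (h₂ : s₂ ≠ t),
    e = s(u, v) ∧ u ∈ D.bag s₁ ∧ v ∈ D.bag s₂ ∧
    ¬ (D.T.induce {x | x ≠ t}).Reachable ⟨s₁, h₁⟩ ⟨s₂, h₂⟩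

/-- The number of edges crossing the bag at node `t`. -/
noncomputable def crossNum (D : TreeCutDecomp G) (t : D.β) : ℕ :=
  {e : Sym2 V | D.Crosses t e}.ncard

/-- The crossing number of the decomposition is at most `k`. -/
def CrossLE (D : TreeCutDecomp G) (k : ℕ) : Prop := ∀ t, D.crossNum t ≤ k

/-- The thickness (maximum bag size) of the decomposition is at most `a`. -/
def ThickLE (D : TreeCutDecomp G) (a : ℕ) : Prop := ∀ t, (D.bag t).ncard ≤ a

end TreeCutDecomp

/-- The `α`-edge-crossing width: minimum crossing number over tree-cut decompositions
of thickness at most `α`. -/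
noncomputable def ecrwA {V : Type u} (G : SimpleGraph V) (a : ℕ) : ℕ :=
  sInf {k | ∃ D : TreeCutDecomp G, D.ThickLE a ∧ D.CrossLE k}

/-- The edge-crossing width: minimum over tree-cut decompositions of the maximum of the
thickness and the crossing number. -/
noncomputable def ecrw {V : Type u} (G : SimpleGraph V) : ℕ :=
  sInf {k | ∃ D : TreeCutDecomp G, D.ThickLE k ∧ D.CrossLE k}

/-- A tree-decomposition of a graph `G`. -/
structure TreeDecomp {V : Type u} (G : SimpleGraph V) where
  β : Type
  fintypeβ : Fintype β
  T : SimpleGraph β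
  isTree : T.IsTree
  bag : β → Set V
  covers : ∀ v : V, ∃ t, v ∈ bag t
  coversEdge : ∀ u v : V, G.Adj u v → ∃ t, u ∈ bag t ∧ v ∈ bag t
  connBag : ∀ v : V, (T.induce {t | v ∈ bag t}).Connected

/-- The tree-width of `G`: minimum over tree-decompositions of (max bag size − 1). -/
noncomputable def treewidth {V : Type u} (G : SimpleGraph V) : ℕ :=
  sInf {w | ∃ D : TreeDecomp G, ∀ t, (D.bag t).ncard ≤ w + 1}


section Helpers
open SimpleGraph Walk

variable {β : Type*} {T : SimpleGraph β}

lemma reach_induce_of_walk {S : Set β} :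
    ∀ {a b : β} (p : T.Walk a b), (∀ x ∈ p.support, x ∈ S) → ∀ (ha : a ∈ S) (hb : b ∈ S),
      (T.induce S).Reachable ⟨a, ha⟩ ⟨b, hb⟩
  | a, _, Walk.nil, _, ha, hb => Reachable.refl _
  | a, b, Walk.cons h q, hS, ha, hb => by
      have hc : _ ∈ S := hS _ (by rw [Walk.support_cons]; exact List.mem_cons_of_mem _ q.start_mem_support)
      refine Reachable.trans (SimpleGraph.Adj.reachable (v := ⟨_, hc⟩) (by simpa using h)) ?_
      exact reach_induce_of_walk q
        (fun x hx => hS x (by rw [Walk.support_cons]; exact List.mem_cons_of_mem _ hx)) hc hb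

lemma not_reach_induce {s₁ s₂ t : β}
    (p : T.Walk s₁ s₂) (huniq : ∀ q : T.Walk s₁ s₂, q.IsPath → q = p)
    (ht : t ∈ p.support) (h₁ : s₁ ≠ t) (h₂ : s₂ ≠ t) :
    ¬ (T.induce {x | x ≠ t}).Reachable ⟨s₁, h₁⟩ ⟨s₂, h₂⟩ := by
  classical
  rintro ⟨w⟩
  set w' : T.Walk s₁ s₂ := w.map (SimpleGraph.Embedding.induce {x | x ≠ t}).toHom with hw'
  have htw : t ∉ w'.support := by
    intro hmem
    replace hmem : t ∈ w.support.map (SimpleGraph.Embedding.induce (G := T) {x | x ≠ t}).toHom := by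
      rw [← Walk.support_map]; exact hmem
    rw [List.mem_map] at hmem
    obtain ⟨x, -, hx⟩ := hmem
    exact x.2 hx
  have hq := huniq (w'.toPath : T.Walk s₁ s₂) w'.toPath.2
  exact htw (w'.support_toPath_subset (hq ▸ ht))

lemma reach_induce_of_not_mem {s₁ s₂ t : β}
    (p : T.Walk s₁ s₂) (ht : t ∉ p.support) (h₁ : s₁ ≠ t) (h₂ : s₂ ≠ t) :
    (T.induce {x | x ≠ t}).Reachable ⟨s₁, h₁⟩ ⟨s₂, h₂⟩ :=
  reach_induce_of_walk p (fun x hx => show x ≠ t from fun hxt => ht (hxt ▸ hx)) h₁ h₂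

lemma parent_orient (pth : ∀ a b : β, T.Walk a b)
    (hp : ∀ a b, (pth a b).IsPath)
    (hu : ∀ a b (q : T.Walk a b), q.IsPath → q = pth a b)
    (r : β) (s s' : β) (hadj : T.Adj s s') :
    (pth s r).getVert 1 = s' ∨ (pth s' r).getVert 1 = s := by
  classical
  by_cases hmem : s ∈ (pth s' r).support
  · right
    have hsingle : (Walk.cons hadj.symm Walk.nil : T.Walk s' s).IsPath := by
      rw [Walk.cons_isPath_iff]
      exact ⟨Walk.IsPath.nil, by simp [hadj.ne']⟩
    have htake : (pth s' r).takeUntil s hmem = Walk.cons hadj.symm Walk.nil := by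
      rw [hu s' s _ ((hp s' r).takeUntil hmem), hu s' s _ hsingle]
    have hspec := Walk.take_spec (pth s' r) hmem
    conv_lhs => rw [← hspec, htake]
    simp [Walk.cons_append, Walk.nil_append, Walk.getVert_cons_succ, Walk.getVert_zero]
  · left
    have hcons : Walk.cons hadj (pth s' r) = pth s r :=
      hu s r _ ((hp s' r).cons hmem)
    rw [← hcons]
    simp [Walk.getVert_cons_succ, Walk.getVert_zero]

lemma parent_adj (pth : ∀ a b : β, T.Walk a b)
    (r : β) (t : β) (ht : t ≠ r) :
    T.Adj t ((pth t r).getVert 1) := by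
  have hlen : 0 < (pth t r).length := by
    rcases Nat.eq_zero_or_pos (pth t r).length with h | h
    · exact absurd (Walk.eq_of_length_eq_zero h) ht
    · exact h
  have := (pth t r).adj_getVert_succ hlen
  simpa [Walk.getVert_zero] using this

lemma parent_eq_self (pth : ∀ a b : β, T.Walk a b)
    (hu : ∀ a b (q : T.Walk a b), q.IsPath → q = pth a b)
    (r : β) : (pth r r).getVert 1 = r := by
  have : (Walk.nil : T.Walk r r) = pth r r := hu r r _ Walk.IsPath.nil
  rw [← this]
  rfl

end Helpers

/-- The trivial one-node tree-cut decomposition. -/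
noncomputable def trivialCut {V : Type u} [Fintype V] (G : SimpleGraph V) : TreeCutDecomp G where
  β := Unit
  fintypeβ := inferInstance
  T := ⊥
  isTree := by
    constructor
    · haveI : Nonempty Unit := ⟨()⟩
      exact ⟨fun a b => by cases a; cases b; exact Reachable.refl _⟩
    · intro v c hc
      cases c with
      | nil => exact hc.ne_nil rfl
      | cons h q => simp at h
  bag _ := Set.univ
  disj := by
    intro s t hst
    exact absurd (Subsingleton.elim s t) hst
  covers v := ⟨(), Set.mem_univ v⟩

lemma trivialCut_thick {V : Type u} [Fintype V] (G : SimpleGraph V) :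
    (trivialCut G).ThickLE (Fintype.card V) := by
  intro t
  simp [trivialCut, Set.ncard_univ, Nat.card_eq_fintype_card]

lemma trivialCut_cross {V : Type u} [Fintype V] (G : SimpleGraph V) :
    (trivialCut G).CrossLE (Fintype.card V) := by
  intro t
  have : {e : Sym2 V | (trivialCut G).Crosses t e} = ∅ := by
    ext e
    simp only [Set.mem_setOf_eq, Set.mem_empty_iff_false, iff_false]
    rintro ⟨-, u, v, s₁, s₂, h₁, h₂, -⟩
    exact h₁ (Subsingleton.elim (α := Unit) s₁ t)
  rw [TreeCutDecomp.crossNum, this]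
  simp

lemma exists_treeDecomp {V : Type u} [Fintype V] {G : SimpleGraph V}
    (D : TreeCutDecomp G) (k : ℕ) (hthick : D.ThickLE k) (hcross : D.CrossLE k) :
    ∃ E : TreeDecomp G, ∀ t, (E.bag t).ncard ≤ 4 * k := by
  classical
  haveI := D.fintypeβ
  -- unique paths in the tree
  obtain ⟨pth, hp, hu⟩ :
      ∃ pth : ∀ a b : D.β, D.T.Walk a b, (∀ a b, (pth a b).IsPath) ∧
        (∀ a b (q : D.T.Walk a b), q.IsPath → q = pth a b) := by
    have h := D.isTree.existsUnique_path
    choose pth h1 h2 using h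
    exact ⟨pth, h1, h2⟩
  -- node of each vertex
  obtain ⟨nd, hnd⟩ : ∃ nd : V → D.β, ∀ v, v ∈ D.bag (nd v) := by
    choose nd hnd using D.covers
    exact ⟨nd, hnd⟩
  have nd_eq : ∀ ⦃v s⦄, v ∈ D.bag s → s = nd v := by
    intro v s hs
    by_contra h
    exact Set.disjoint_left.mp (D.disj h) hs (hnd v)
  -- root and parent
  obtain ⟨r⟩ : Nonempty D.β := D.isTree.isConnected.nonempty
  set f : D.β → D.β := fun t => (pth t r).getVert 1 with hf
  have hfr : f r = r := parent_eq_self pth hu r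
  have hfadj : ∀ t, f t ≠ t → D.T.Adj t (f t) := by
    intro t htf
    refine parent_adj pth r t ?_
    intro h
    subst h
    exact htf hfr
  have horient : ∀ s s', D.T.Adj s s' → f s = s' ∨ f s' = s := fun s s' h =>
    parent_orient pth hp hu r s s' h
  -- bags
  set C : D.β → Set V := fun t => {v | ∃ e, D.Crosses t e ∧ v ∈ e} with hC
  set P : D.β → Set V := fun t => {v | f t ≠ t ∧ v ∈ D.bag (f t) ∧ ∃ u ∈ D.bag t, G.Adj u v} with hP
  set Y : D.β → Set V := fun t => (D.bag t ∪ C t) ∪ P t with hY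
  have hXY : ∀ t, D.bag t ⊆ Y t := fun t => fun v hv => Or.inl (Or.inl hv)
  have hCY : ∀ t, C t ⊆ Y t := fun t => fun v hv => Or.inl (Or.inr hv)
  have hPY : ∀ t, P t ⊆ Y t := fun t => fun v hv => Or.inr hv
  -- the connectivity "key": every node of S_v is connected to nd v within S_v
  have key : ∀ (v : V) (t : D.β), v ∈ Y t →
      ∃ w : D.T.Walk t (nd v), ∀ x ∈ w.support, v ∈ Y x := by
    intro v t ht
    have ht0 := ht
    -- symmetric sub-case for crossing edges
    have sub : ∀ (x y : V) (s₂ : D.β) (h₁ : nd v ≠ t) (h₂ : s₂ ≠ t),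
        G.Adj x y → v = x → x ∈ D.bag (nd v) → y ∈ D.bag s₂ →
        ¬ (D.T.induce {z | z ≠ t}).Reachable ⟨nd v, h₁⟩ ⟨s₂, h₂⟩ →
        ∃ w : D.T.Walk t (nd v), ∀ z ∈ w.support, v ∈ Y z := by
      intro x y s₂ h₁ h₂ hadj hvx hx hy hnr
      set p : D.T.Walk (nd v) s₂ := pth (nd v) s₂ with hpdef
      have htp : t ∈ p.support := by
        by_contra h
        exact hnr (reach_induce_of_not_mem p h h₁ h₂)
      set q := p.takeUntil t htp with hq
      -- s₂ does not lie on q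
      have hs₂q : s₂ ∉ q.support := by
        intro hmem
        have hspec := Walk.take_spec p htp
        have hsup : p.support = q.support ++ (p.dropUntil t htp).support.tail := by
          conv_lhs => rw [← hspec]
          rw [Walk.support_append]
        have hnodup := (hp (nd v) s₂).support_nodup
        rw [hsup, List.nodup_append] at hnodup
        have hs₂drop : s₂ ∈ (p.dropUntil t htp).support.tail := by
          have h1 : s₂ ∈ (p.dropUntil t htp).support := Walk.end_mem_support _
          rw [Walk.support_eq_cons, List.mem_cons] at h1
          rcases h1 with h1 | h1
          · exact absurd h1 h₂
          · exact h1
        exact hnodup.2.2 s₂ hmem s₂ hs₂drop rfl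
      refine ⟨q.reverse, ?_⟩
      intro z hz
      rw [Walk.support_reverse, List.mem_reverse] at hz
      by_cases hzt : z = t
      · exact hzt ▸ ht
      by_cases hznd : z = nd v
      · exact hznd ▸ hXY (nd v) (hnd v)
      -- z is an interior node of p, so the edge crosses z
      have hzp : z ∈ p.support := Walk.support_takeUntil_subset p htp hz
      have hzs₂ : s₂ ≠ z := fun h => hs₂q (h ▸ hz)
      have hznd' : nd v ≠ z := fun h => hznd h.symm
      refine hCY z ⟨s(x, y), ⟨G.mem_edgeSet.mpr hadj, x, y, nd v, s₂, hznd', hzs₂, rfl, hx, hy,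
        not_reach_induce p (hu (nd v) s₂) hzp hznd' hzs₂⟩, ?_⟩
      rw [Sym2.mem_iff]
      exact Or.inl hvx
    rcases ht with (hX | hc) | hPm
    · -- v ∈ bag t : t = nd v
      have : t = nd v := nd_eq hX
      subst this
      exact ⟨Walk.nil, by intro x hx; rw [Walk.mem_support_nil_iff] at hx; subst hx; exact hXY _ (hnd v)⟩
    · -- v ∈ C t
      obtain ⟨e, hcr, hve⟩ := hc
      obtain ⟨hE, x, y, s₁, s₂, h₁, h₂, hexy, hx, hy, hnr⟩ := hcr
      subst hexy
      rw [Sym2.mem_iff] at hve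
      rcases hve with hvx | hvy
      · have hs₁ : s₁ = nd v := nd_eq (hvx ▸ hx)
        subst hs₁
        exact sub x y s₂ h₁ h₂ (G.mem_edgeSet.mp hE) hvx hx hy hnr
      · have hs₂ : s₂ = nd v := nd_eq (hvy ▸ hy)
        subst hs₂
        exact sub y x s₁ h₂ h₁ (G.mem_edgeSet.mp hE).symm hvy hy hx (fun h => hnr h.symm)
    · -- v ∈ P t
      obtain ⟨hft, hvX, -⟩ := hPm
      have hfnd : f t = nd v := nd_eq hvX
      have hadjT : D.T.Adj t (nd v) := hfnd ▸ hfadj t hft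
      refine ⟨Walk.cons hadjT Walk.nil, ?_⟩
      intro z hz
      rw [Walk.support_cons, List.mem_cons] at hz
      rcases hz with hz | hz
      · exact hz ▸ ht0
      · rw [Walk.mem_support_nil_iff] at hz
        exact hz ▸ hXY (nd v) (hnd v)
  -- cardinality bound
  have hcard : ∀ t, (Y t).ncard ≤ 4 * k := by
    intro t
    have h1 : (D.bag t).ncard ≤ k := hthick t
    have h3 : (P t).ncard ≤ k := by
      refine le_trans (Set.ncard_le_ncard ?_ (Set.toFinite _)) (hthick (f t))
      intro v hv
      exact hv.2.1
    have h2 : (C t).ncard ≤ k + k := by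
      have hdecomp : ∀ e : Sym2 V, ∃ x y : V, e = s(x, y) := by
        intro e
        induction e using Sym2.ind with
        | _ x y => exact ⟨x, y, rfl⟩
      choose F1 F2 hF using hdecomp
      have hsub : C t ⊆ (F1 '' {e | D.Crosses t e}) ∪ (F2 '' {e | D.Crosses t e}) := by
        rintro z ⟨e, hce, hze⟩
        have he := hF e
        rw [he, Sym2.mem_iff] at hze
        rcases hze with hz | hz
        · exact Or.inl ⟨e, hce, hz.symm⟩
        · exact Or.inr ⟨e, hce, hz.symm⟩
      refine le_trans (Set.ncard_le_ncard hsub (Set.toFinite _)) ?_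
      refine le_trans (Set.ncard_union_le _ _) ?_
      have hi1 := Set.ncard_image_le (f := F1) (s := {e | D.Crosses t e}) (Set.toFinite _)
      have hi2 := Set.ncard_image_le (f := F2) (s := {e | D.Crosses t e}) (Set.toFinite _)
      have hk := hcross t
      rw [TreeCutDecomp.crossNum] at hk
      omega
    calc (Y t).ncard ≤ (D.bag t ∪ C t).ncard + (P t).ncard := Set.ncard_union_le _ _
      _ ≤ ((D.bag t).ncard + (C t).ncard) + (P t).ncard :=
          Nat.add_le_add_right (Set.ncard_union_le _ _) _
      _ ≤ (k + (k + k)) + k := by omega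
      _ = 4 * k := by ring
  refine ⟨⟨D.β, D.fintypeβ, D.T, D.isTree, Y, ?_, ?_, ?_⟩, hcard⟩
  · -- covers
    exact fun v => ⟨nd v, hXY (nd v) (hnd v)⟩
  · -- coversEdge
    intro u v hadj
    by_cases hss : nd u = nd v
    · exact ⟨nd u, hXY _ (hnd u), hXY _ (hss ▸ hnd v)⟩
    by_cases hadjT : D.T.Adj (nd u) (nd v)
    · rcases horient _ _ hadjT with hor | hor
      · -- f (nd u) = nd v : cover at nd u
        refine ⟨nd u, hXY _ (hnd u), hPY _ ⟨?_, ?_, u, hnd u, hadj⟩⟩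
        · rw [hor]; exact hadjT.ne'
        · rw [hor]; exact hnd v
      · -- f (nd v) = nd u : cover at nd v
        refine ⟨nd v, hPY _ ⟨?_, ?_, v, hnd v, hadj.symm⟩, hXY _ (hnd v)⟩
        · rw [hor]; exact hadjT.ne
        · rw [hor]; exact hnd u
    · -- distance at least 2: use a crossing node
      set p := pth (nd u) (nd v) with hpdef
      have hlen : 0 < p.length := by
        rcases Nat.eq_zero_or_pos p.length with h | h
        · exact absurd (Walk.eq_of_length_eq_zero h) hss
        · exact h
      set t := p.getVert 1 with htdef
      have hadj1 : D.T.Adj (nd u) t := by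
        have := p.adj_getVert_succ hlen
        simpa [Walk.getVert_zero] using this
      have h₁ : nd u ≠ t := hadj1.ne
      have h₂ : nd v ≠ t := by
        intro h
        exact hadjT (h ▸ hadj1)
      have htp : t ∈ p.support := by
        rw [Walk.mem_support_iff_exists_getVert]
        exact ⟨1, rfl, hlen⟩
      have hcr : D.Crosses t s(u, v) :=
        ⟨G.mem_edgeSet.mpr hadj, u, v, nd u, nd v, h₁, h₂, rfl, hnd u, hnd v,
          not_reach_induce p (hu (nd u) (nd v)) htp h₁ h₂⟩
      refine ⟨t, hCY t ⟨s(u, v), hcr, ?_⟩, hCY t ⟨s(u, v), hcr, ?_⟩⟩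
      · exact Sym2.mem_mk_left u v
      · exact Sym2.mem_mk_right u v
  · -- connBag
    intro v
    haveI : Nonempty {t | v ∈ Y t} := ⟨⟨nd v, hXY _ (hnd v)⟩⟩
    constructor
    rintro ⟨t₁, h₁⟩ ⟨t₂, h₂⟩
    obtain ⟨w₁, hw₁⟩ := key v t₁ h₁
    obtain ⟨w₂, hw₂⟩ := key v t₂ h₂
    exact (reach_induce_of_walk w₁ hw₁ h₁ (hXY _ (hnd v))).trans
      (reach_induce_of_walk w₂ hw₂ h₂ (hXY _ (hnd v))).symm

/-- The trivial tree-decomposition for an empty graph. -/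
noncomputable def trivialDecomp {V : Type u} (G : SimpleGraph V) [IsEmpty V] : TreeDecomp G where
  β := Unit
  fintypeβ := inferInstance
  T := ⊥
  isTree := by
    constructor
    · haveI : Nonempty Unit := ⟨()⟩
      exact ⟨fun a b => by cases a; cases b; exact Reachable.refl _⟩
    · intro v c hc
      cases c with
      | nil => exact hc.ne_nil rfl
      | cons h q => simp at h
  bag _ := ∅
  covers v := isEmptyElim v
  coversEdge u v _ := isEmptyElim u
  connBag v := isEmptyElim v

/-- For every graph `G`, `tw(G) ≤ 5·ecrw(G) − 1`. -/
theorem stmt_2 {V : Type u} [Fintype V] (G : SimpleGraph V) :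
    treewidth G ≤ 5 * ecrw G - 1 := by
  classical
  by_cases hV : IsEmpty V
  · haveI := hV
    have h0 : treewidth G ≤ 0 :=
      Nat.sInf_le ⟨trivialDecomp G, fun t => by simp [trivialDecomp]⟩
    exact le_trans h0 (Nat.zero_le _)
  · haveI : Nonempty V := not_isEmpty_iff.mp hV
    have hset : {k | ∃ D : TreeCutDecomp G, D.ThickLE k ∧ D.CrossLE k}.Nonempty :=
      ⟨Fintype.card V, trivialCut G, trivialCut_thick G, trivialCut_cross G⟩
    have hmem : ∃ D : TreeCutDecomp G, D.ThickLE (ecrw G) ∧ D.CrossLE (ecrw G) :=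
      Nat.sInf_mem hset
    obtain ⟨D, hthick, hcross⟩ := hmem
    set k := ecrw G with hk
    have hk1 : 1 ≤ k := by
      by_contra h
      have hk0 : k = 0 := by omega
      obtain ⟨v⟩ := ‹Nonempty V›
      obtain ⟨s, hs⟩ := D.covers v
      have := hthick s
      rw [hk0] at this
      have hpos : 0 < (D.bag s).ncard := by
        rw [Set.ncard_pos (Set.toFinite _)]
        exact ⟨v, hs⟩
      omega
    obtain ⟨E, hE⟩ := exists_treeDecomp D k hthick hcross
    refine Nat.sInf_le ⟨E, fun t => le_trans (hE t) ?_⟩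
    omega
end

section
/- For every graph G and every positive integer α, the tree-width of G satisfies tw(G) ≤ 3·ecrw_α(G) + 2α − 1. -/
open SimpleGraph

universe u

section TreeAux
open SimpleGraph
variable {β : Type u} {T : SimpleGraph β}

/-- Lift a walk whose support lies in `S` to reachability in the induced graph. -/
lemma reachable_induce_of_walk {S : Set β} :
    ∀ {a b : β} (w : T.Walk a b) (_ : ∀ x ∈ w.support, x ∈ S)
    (ha : a ∈ S) (hb : b ∈ S),
    (T.induce S).Reachable ⟨a, ha⟩ ⟨b, hb⟩ := by
  intro a b w
  induction w with
  | nil => intro _ _ _; rfl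
  | @cons u v c h p ih =>
    intro hS ha hb
    have hv : v ∈ S := hS v (by simp [Walk.support_cons])
    have h1 : (T.induce S).Adj ⟨u, ha⟩ ⟨v, hv⟩ := by simpa using h
    exact h1.reachable.trans
      (ih (fun x hx => hS x (by simp [Walk.support_cons]; exact Or.inr hx)) hv hb)

/-- If `t` is an interior vertex of a path from `a` to `b` in a tree, then `a` and `b` are
not reachable after deleting `t`. -/
lemma not_reachable_induce_of_mem_path (hT : T.IsTree) {a b t : β}
    (p : T.Walk a b) (hp : p.IsPath) (htp : t ∈ p.support)
    (ha : a ≠ t) (hb : b ≠ t) :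
    ¬ (T.induce {x | x ≠ t}).Reachable ⟨a, ha⟩ ⟨b, hb⟩ := by
  rintro ⟨w⟩
  classical
  let w' : T.Walk a b := w.map (Embedding.induce {x | x ≠ t}).toHom
  have hsup : t ∉ w'.support := by
    show t ∉ (w.map (Embedding.induce {x | x ≠ t}).toHom).support
    rw [Walk.support_map]
    intro hmem
    obtain ⟨⟨x, hx⟩, -, hx2⟩ := List.mem_map.1 hmem
    exact hx hx2
  have hpath : (w'.toPath : T.Walk a b).IsPath := (w'.toPath).2
  have := (hT.existsUnique_path a b).unique hpath hp
  have : t ∈ (w'.toPath : T.Walk a b).support := this ▸ htp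
  exact hsup (Walk.support_toPath_subset w' this)

/-- If `a` and `b` are not reachable after deleting `t`, then `t` lies on any path from `a` to
`b`. -/
lemma mem_path_of_not_reachable {a b t : β}
    (p : T.Walk a b) (ha : a ≠ t) (hb : b ≠ t)
    (hnr : ¬ (T.induce {x | x ≠ t}).Reachable ⟨a, ha⟩ ⟨b, hb⟩) :
    t ∈ p.support := by
  by_contra htp
  exact hnr (reachable_induce_of_walk p (fun x hx (hc : x = t) => htp (hc ▸ hx)) ha hb)

noncomputable def treePath (hT : T.IsTree) (a b : β) : T.Walk a b :=
  (hT.existsUnique_path a b).choose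

lemma treePath_isPath (hT : T.IsTree) (a b : β) : (treePath hT a b).IsPath :=
  (hT.existsUnique_path a b).choose_spec.1

lemma treePath_unique (hT : T.IsTree) {a b : β} (p : T.Walk a b) (hp : p.IsPath) :
    p = treePath hT a b :=
  (hT.existsUnique_path a b).choose_spec.2 p hp

open Classical in
noncomputable def tparent (hT : T.IsTree) (r t : β) : β :=
  if t = r then r else (treePath hT t r).getVert 1

lemma tparent_root (hT : T.IsTree) (r : β) : tparent hT r r = r := by
  classical
  rw [tparent]
  simp

lemma adj_tparent (hT : T.IsTree) (r : β) {t : β} (h : t ≠ r) :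
    T.Adj t (tparent hT r t) := by
  classical
  rw [tparent]
  rw [if_neg h]
  have hlen : 0 < (treePath hT t r).length := by
    by_contra hl
    push_neg at hl
    interval_cases hl' : (treePath hT t r).length
    exact h ((treePath hT t r).eq_of_length_eq_zero hl')
  have := (treePath hT t r).adj_getVert_succ hlen
  simpa using this

lemma tparent_eq_of_adj (hT : T.IsTree) (r : β) {a b : β} (h : T.Adj a b) :
    tparent hT r a = b ∨ tparent hT r b = a := by
  classical
  by_cases har : a = r
  · right
    subst har
    have hbr : b ≠ a := h.ne'
    have hpath : (Walk.cons h.symm Walk.nil).IsPath := by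
      simp [Walk.cons_isPath_iff, h.ne']
    have := treePath_unique hT _ hpath
    rw [tparent, if_neg hbr, ← this]
    rfl
  by_cases hbr : b = r
  · left
    subst hbr
    have hpath : (Walk.cons h Walk.nil).IsPath := by
      simp [Walk.cons_isPath_iff, h.ne]
    have := treePath_unique hT _ hpath
    rw [tparent, if_neg h.ne, ← this]
    rfl
  · by_cases hmem : b ∈ (treePath hT a r).support
    · left
      have htake : ((treePath hT a r).takeUntil b hmem).IsPath :=
        (treePath_isPath hT a r).takeUntil hmem
      have hsingle : (Walk.cons h Walk.nil : T.Walk a b).IsPath := by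
        simp [Walk.cons_isPath_iff, h.ne]
      have huniq : (treePath hT a r).takeUntil b hmem = Walk.cons h Walk.nil := by
        rw [treePath_unique hT _ htake, treePath_unique hT _ hsingle]
      have hspec := (treePath hT a r).take_spec hmem
      rw [tparent, if_neg har, ← hspec, huniq]
      simp [Walk.getVert_append]
    · right
      have hpath : (Walk.cons h.symm (treePath hT a r)).IsPath := by
        rw [Walk.cons_isPath_iff]
        exact ⟨treePath_isPath hT a r, hmem⟩
      have := treePath_unique hT _ hpath
      rw [tparent, if_neg hbr, ← this]
      simp [Walk.getVert_cons_succ, Walk.getVert_zero]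

lemma exists_internal_or_adj (hT : T.IsTree) {a b : β} (hab : a ≠ b) :
    T.Adj a b ∨ ∃ t, t ≠ a ∧ t ≠ b ∧ ∀ (ha : a ≠ t) (hb : b ≠ t),
      ¬ (T.induce {x | x ≠ t}).Reachable ⟨a, ha⟩ ⟨b, hb⟩ := by
  obtain ⟨p, hp, -⟩ := hT.existsUnique_path a b
  cases p with
  | nil => exact absurd rfl hab
  | @cons _ c _ h' q =>
    by_cases hc : c = b
    · subst hc; exact Or.inl h'
    · right
      refine ⟨c, ?_, hc, ?_⟩
      · have hq := (Walk.cons_isPath_iff h' q).mp hp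
        exact fun hca => hq.2 (hca ▸ q.start_mem_support)
      · intro ha hb
        exact not_reachable_induce_of_mem_path hT (Walk.cons h' q) hp
          (by simp [Walk.support_cons]) ha hb

end TreeAux

section StarAux
open SimpleGraph
variable {V : Type u}

/-- The star graph on `Option V` with center `none`. -/
def starG (V : Type u) : SimpleGraph (Option V) where
  Adj x y := (x = none ∧ y ≠ none) ∨ (x ≠ none ∧ y = none)
  symm := ⟨by rintro x y (⟨h1, h2⟩ | ⟨h1, h2⟩) <;> simp_all⟩
  loopless := ⟨by rintro x (⟨h1, h2⟩ | ⟨h1, h2⟩) <;> simp_all⟩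

lemma starG_none_mem_support :
    ∀ {u v : Option V} (w : (starG V).Walk u v), w.length ≠ 0 → none ∈ w.support := by
  intro u v w hw
  cases w with
  | nil => simp at hw
  | @cons _ c _ h p =>
    by_cases hu : u = none
    · simp [Walk.support_cons, hu]
    · have hc : c = none := by
        rcases h with ⟨h1, _⟩ | ⟨_, h2⟩
        · exact absurd h1 hu
        · exact h2
      simp only [Walk.support_cons, List.mem_cons]
      exact Or.inr (hc ▸ p.start_mem_support)

lemma starG_isTree : (starG V).IsTree := by
  constructor
  · constructor
    intro x y
    have key : ∀ z : Option V, (starG V).Reachable z none := by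
      intro z
      cases z with
      | none => rfl
      | some v => exact Adj.reachable (Or.inr ⟨by simp, rfl⟩)
    exact (key x).trans (key y).symm
  · intro v c hc
    have h3 := hc.three_le_length
    have hnodup := hc.2
    cases c with
    | nil => simp at h3
    | @cons _ a _ h1 p =>
      cases p with
      | nil => simp [Walk.length_cons] at h3
      | @cons _ b _ h2 q =>
        have htail : (Walk.cons h1 (Walk.cons h2 q)).support.tail = a :: q.support := by
          simp [Walk.support_cons]
        rw [htail] at hnodup
        rw [List.nodup_cons] at hnodup
        obtain ⟨hna, hnq⟩ := hnodup
        by_cases hv : v = none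
        · subst hv
          have ha : a ≠ none := by
            rcases h1 with ⟨_, h⟩ | ⟨h, _⟩
            · exact h
            · exact absurd rfl h
          have hb : b = none := by
            rcases h2 with ⟨h, _⟩ | ⟨_, h⟩
            · exact absurd h ha
            · exact h
          subst hb
          cases q with
          | nil => simp [Walk.length_cons] at h3
          | cons h4 q2 =>
            rw [Walk.support_cons, List.nodup_cons] at hnq
            exact hnq.1 q2.end_mem_support
        · have ha : a = none := by
            rcases h1 with ⟨h, _⟩ | ⟨_, h⟩
            · exact absurd h hv
            · exact h
          have hq : q.length ≠ 0 := by
            intro h0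
            have := q.eq_of_length_eq_zero h0
            subst this
            simp [Walk.length_cons] at h3
            omega
          exact hna (ha ▸ starG_none_mem_support q hq)

lemma endpoints_ncard_le [Finite V] (E : Set (Sym2 V)) :
    {x | ∃ e ∈ E, x ∈ e}.ncard ≤ 2 * E.ncard := by
  classical
  have hE : E.Finite := Set.toFinite E
  refine Set.Finite.induction_on
    (motive := fun E _ => {x | ∃ e ∈ E, x ∈ e}.ncard ≤ 2 * E.ncard) E hE (by simp) ?_
  intro e E' hnotmem hE' ih
  have hsub : {x | ∃ e' ∈ insert e E', x ∈ e'} ⊆ {x | x ∈ e} ∪ {x | ∃ e' ∈ E', x ∈ e'} := by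
    rintro x ⟨e', he', hx⟩
    rcases he' with rfl | he'
    · exact Or.inl hx
    · exact Or.inr ⟨e', he', hx⟩
  have h2 : {x | x ∈ e}.ncard ≤ 2 := by
    induction e with
    | _ a b =>
      have : {x | x ∈ s(a, b)} = {a, b} := by ext x; simp [Sym2.mem_iff]
      rw [this]
      exact (Set.ncard_insert_le _ _).trans (by simp)
  calc {x | ∃ e' ∈ insert e E', x ∈ e'}.ncard
      ≤ ({x | x ∈ e} ∪ {x | ∃ e' ∈ E', x ∈ e'}).ncard :=
        Set.ncard_le_ncard hsub (Set.toFinite _)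
    _ ≤ {x | x ∈ e}.ncard + {x | ∃ e' ∈ E', x ∈ e'}.ncard := Set.ncard_union_le _ _
    _ ≤ 2 + 2 * E'.ncard := Nat.add_le_add h2 ih
    _ ≤ 2 * (insert e E').ncard := by
        rw [Set.ncard_insert_of_notMem hnotmem hE']
        omega

end StarAux


/-- For every graph `G` and positive integer `α`, `tw(G) ≤ 3·ecrw_α(G) + 2α − 1`. -/
theorem stmt_3 {V : Type u} [Fintype V] (G : SimpleGraph V) (α : ℕ) (hα : 0 < α) :
    treewidth G ≤ 3 * ecrwA G α + 2 * α - 1 := by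
  classical
  -- the defining set of `ecrwA` is nonempty: use the star decomposition with singleton bags
  have hne : {k | ∃ D : TreeCutDecomp G, D.ThickLE α ∧ D.CrossLE k}.Nonempty := by
    have eqv := Fintype.equivFin V
    refine ⟨Nat.card (Sym2 V),
      ⟨Option (Fin (Fintype.card V)), inferInstance, starG _, starG_isTree,
        fun o => o.elim ∅ (fun i => {eqv.symm i}), ?_, ?_⟩, ?_, ?_⟩
    · rintro (_ | i) (_ | j) hst
      · exact absurd rfl hst
      · simp
      · simp
      · have hij : eqv.symm i ≠ eqv.symm j := by
          intro h
          exact hst (by rw [eqv.symm.injective h])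
        simp only [Option.elim]
        rw [Set.disjoint_singleton_left]
        simpa using hij
    · intro v
      exact ⟨some (eqv v), by simp⟩
    · rintro (_ | i)
      · simp
      · simpa using Nat.one_le_iff_ne_zero.mpr hα.ne'
    · intro t
      unfold TreeCutDecomp.crossNum
      calc _ ≤ (Set.univ : Set (Sym2 V)).ncard :=
            Set.ncard_le_ncard (Set.subset_univ _) Set.finite_univ
        _ = Nat.card (Sym2 V) := Set.ncard_univ _
  have hkK : ecrwA G α ∈ {k | ∃ D : TreeCutDecomp G, D.ThickLE α ∧ D.CrossLE k} :=
    Nat.sInf_mem hne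
  obtain ⟨D, hthick, hcross⟩ := hkK
  set k := ecrwA G α with hk
  -- set up the root and the parent function
  have hTβ : Nonempty D.β := D.isTree.isConnected.nonempty
  let r : D.β := hTβ.some
  let P : D.β → D.β := tparent D.isTree r
  let Y : D.β → Set V := fun t => (D.bag t ∪ D.bag (P t)) ∪ {x | ∃ e, D.Crosses t e ∧ x ∈ e}
  have bagUnique : ∀ {x : V} {s t : D.β}, x ∈ D.bag s → x ∈ D.bag t → s = t := by
    intro x s t hs ht
    by_contra h
    exact Set.disjoint_left.mp (D.disj h) hs ht
  let home : V → D.β := fun v => (D.covers v).choose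
  have hhome : ∀ v, v ∈ D.bag (home v) := fun v => (D.covers v).choose_spec
  have hYhome : ∀ v, v ∈ Y (home v) := fun v => Or.inl (Or.inl (hhome v))
  -- covers
  have covers : ∀ v : V, ∃ t, v ∈ Y t := fun v => ⟨home v, hYhome v⟩
  -- coversEdge
  have coversEdge : ∀ u v : V, G.Adj u v → ∃ t, u ∈ Y t ∧ v ∈ Y t := by
    intro u v huv
    by_cases hee : home u = home v
    · exact ⟨home u, hYhome u, by rw [hee]; exact hYhome v⟩
    · rcases exists_internal_or_adj D.isTree hee with hadj | ⟨c, hcu, hcv, hsep⟩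
      · rcases tparent_eq_of_adj D.isTree r hadj with hpar | hpar
        · refine ⟨home u, hYhome u, Or.inl (Or.inr ?_)⟩
          show v ∈ D.bag (P (home u))
          rw [show P (home u) = home v from hpar]
          exact hhome v
        · refine ⟨home v, Or.inl (Or.inr ?_), hYhome v⟩
          show u ∈ D.bag (P (home v))
          rw [show P (home v) = home u from hpar]
          exact hhome u
      · have hcross' : D.Crosses c s(u, v) :=
          ⟨G.mem_edgeSet.mpr huv, u, v, home u, home v, fun h => hcu h.symm, fun h => hcv h.symm,
            rfl, hhome u, hhome v, hsep _ _⟩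
        exact ⟨c, Or.inr ⟨s(u, v), hcross', by simp⟩, Or.inr ⟨s(u, v), hcross', by simp⟩⟩
  -- connBag
  have connBag : ∀ v : V, (D.T.induce {t | v ∈ Y t}).Connected := by
    intro v
    set S : Set D.β := {t | v ∈ Y t} with hS
    have homeS : home v ∈ S := hYhome v
    have key : ∀ (t : D.β) (ht : t ∈ S),
        (D.T.induce S).Reachable ⟨t, ht⟩ ⟨home v, homeS⟩ := by
      intro t ht
      have aux : ∀ (e : Sym2 V), e ∈ G.edgeSet → ∀ (z : V) (s₂ : D.β) (h₁ : home v ≠ t)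
          (h₂ : s₂ ≠ t), e = s(v, z) → z ∈ D.bag s₂ →
          (¬ (D.T.induce {x | x ≠ t}).Reachable ⟨home v, h₁⟩ ⟨s₂, h₂⟩) →
          (D.T.induce S).Reachable ⟨t, ht⟩ ⟨home v, homeS⟩ := by
        intro e he z s₂ h₁ h₂ heq hz hnr
        subst heq
        set p := treePath D.isTree (home v) s₂ with hpdef
        have hppath : p.IsPath := treePath_isPath _ _ _
        have htp : t ∈ p.support := mem_path_of_not_reachable p h₁ h₂ hnr
        set q := p.takeUntil t htp with hqdef
        have hnd := hppath.support_nodup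
        rw [← p.take_spec htp, SimpleGraph.Walk.support_append, List.nodup_append] at hnd
        have hs₂notin : s₂ ∉ q.support := by
          intro hs₂
          have hmem := (p.dropUntil t htp).end_mem_support
          rw [SimpleGraph.Walk.mem_support_iff] at hmem
          rcases hmem with h | h
          · exact h₂ h
          · exact hnd.2.2 s₂ hs₂ s₂ h rfl
        have hqS : ∀ s ∈ q.support, s ∈ S := by
          intro s hs
          have hsp : s ∈ p.support := p.support_takeUntil_subset htp hs
          by_cases hsv : s = home v
          · subst hsv
            exact Or.inl (Or.inl (hhome v))
          · have hs₂s : s₂ ≠ s := fun hh => hs₂notin (hh ▸ hs)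
            have hs₁s : home v ≠ s := fun hh => hsv hh.symm
            have hnr_s := not_reachable_induce_of_mem_path D.isTree p hppath hsp hs₁s hs₂s
            exact Or.inr ⟨s(v, z), ⟨he, v, z, home v, s₂, hs₁s, hs₂s, rfl, hhome v, hz, hnr_s⟩,
              by simp⟩
        exact (reachable_induce_of_walk q hqS homeS ht).symm
      have hcase := ht
      rcases hcase with (h1 | h2) | h3
      · have : t = home v := bagUnique h1 (hhome v)
        subst this
        exact Reachable.refl _
      · have hPt : P t = home v := bagUnique h2 (hhome v)
        by_cases ht' : t = home v
        · subst ht'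
          exact Reachable.refl _
        · have htr : t ≠ r := by
            intro hr
            apply ht'
            rw [← hPt, hr]
            exact (tparent_root D.isTree r).symm
          have hadj : D.T.Adj t (home v) := hPt ▸ adj_tparent D.isTree r htr
          have : (D.T.induce S).Adj ⟨t, ht⟩ ⟨home v, homeS⟩ := by simpa using hadj
          exact this.reachable
      · obtain ⟨e, hcr, hv⟩ := h3
        obtain ⟨he, u', v', s₁, s₂, h₁, h₂, heq, hu', hv', hnr⟩ := hcr
        subst heq
        rcases Sym2.mem_iff.mp hv with rfl | rfl
        · have hs₁ : s₁ = home v := bagUnique hu' (hhome v)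
          subst hs₁
          exact aux s(v, v') he v' s₂ h₁ h₂ rfl hv' hnr
        · have hs₂ : s₂ = home v := bagUnique hv' (hhome v)
          subst hs₂
          rw [Sym2.eq_swap] at he
          exact aux s(v, u') he u' s₁ h₂ h₁ rfl hu' (fun hr => hnr hr.symm)
    rw [SimpleGraph.connected_iff]
    refine ⟨?_, ⟨⟨home v, homeS⟩⟩⟩
    rintro ⟨tx, hx⟩ ⟨ty, hy⟩
    exact (key tx hx).trans (key ty hy).symm
  -- bag size bound
  have hYcard : ∀ t, (Y t).ncard ≤ 2 * α + 2 * k := by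
    intro t
    have h1 : (D.bag t ∪ D.bag (P t)).ncard ≤ α + α :=
      (Set.ncard_union_le _ _).trans (Nat.add_le_add (hthick t) (hthick (P t)))
    have h2 : {x | ∃ e, D.Crosses t e ∧ x ∈ e}.ncard ≤ 2 * k := by
      have hend := endpoints_ncard_le (V := V) {e | D.Crosses t e}
      have hcn : {e | D.Crosses t e}.ncard ≤ k := hcross t
      calc {x | ∃ e, D.Crosses t e ∧ x ∈ e}.ncard
          = {x | ∃ e ∈ {e | D.Crosses t e}, x ∈ e}.ncard := rfl
        _ ≤ 2 * {e | D.Crosses t e}.ncard := hend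
        _ ≤ 2 * k := Nat.mul_le_mul_left 2 hcn
    calc (Y t).ncard
        ≤ (D.bag t ∪ D.bag (P t)).ncard + {x | ∃ e, D.Crosses t e ∧ x ∈ e}.ncard :=
          Set.ncard_union_le _ _
      _ ≤ (α + α) + 2 * k := Nat.add_le_add h1 h2
      _ = 2 * α + 2 * k := by ring
  refine Nat.sInf_le ⟨⟨D.β, D.fintypeβ, D.T, D.isTree, Y, covers, coversEdge, connBag⟩, ?_⟩
  intro t
  show (Y t).ncard ≤ 3 * k + 2 * α - 1 + 1
  have := hYcard t
  omega
end

section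
/- For every graph G, ecrw(G) ≤ tpw(G), where tpw denotes tree-partition-width. -/
open SimpleGraph

universe u

/-- A tree-cut decomposition is a tree-partition: every edge lies within a bag or
between bags at adjacent nodes of the tree. -/
def TreeCutDecomp.IsTreePartition {V : Type u} {G : SimpleGraph V} (D : TreeCutDecomp G) : Prop :=
  ∀ u v : V, G.Adj u v →
    (∃ t, u ∈ D.bag t ∧ v ∈ D.bag t) ∨ (∃ t s, D.T.Adj t s ∧ u ∈ D.bag t ∧ v ∈ D.bag s)

/-- The tree-partition-width of `G`: minimum thickness over tree-partitions. -/
noncomputable def tpw {V : Type u} (G : SimpleGraph V) : ℕ :=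
  sInf {a | ∃ D : TreeCutDecomp G, D.IsTreePartition ∧ D.ThickLE a}

/-- The trivial tree-cut decomposition with a single bag. -/
def trivDecomp {V : Type u} (G : SimpleGraph V) : TreeCutDecomp G where
  β := Unit
  fintypeβ := inferInstance
  T := ⊥
  isTree := ⟨SimpleGraph.Connected.mk SimpleGraph.preconnected_bot, SimpleGraph.isAcyclic_bot⟩
  bag _ := Set.univ
  disj := fun a b h => (h (Subsingleton.elim a b)).elim
  covers := fun v => ⟨(), Set.mem_univ v⟩

theorem trivDecomp_isTreePartition {V : Type u} (G : SimpleGraph V) :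
    (trivDecomp G).IsTreePartition := fun u v _ =>
  Or.inl ⟨(), Set.mem_univ u, Set.mem_univ v⟩

theorem tpPartition_crossLE {V : Type u} {G : SimpleGraph V} (D : TreeCutDecomp G)
    (hP : D.IsTreePartition) (k : ℕ) : D.CrossLE k := by
  intro t
  have h0 : {e : Sym2 V | D.Crosses t e} = ∅ := by
    ext e
    simp only [Set.mem_setOf_eq, Set.mem_empty_iff_false, iff_false]
    rintro ⟨he, u, v, s₁, s₂, h₁, h₂, rfl, hu, hv, hnr⟩
    have hadj : G.Adj u v := he
    have key : ∀ {a b : D.β} {x : V}, x ∈ D.bag a → x ∈ D.bag b → a = b := by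
      intro a b x ha hb
      by_contra hne
      exact (D.disj hne).ne_of_mem ha hb rfl
    rcases hP u v hadj with ⟨s, hus, hvs⟩ | ⟨a, b, hab, hua, hvb⟩
    · have e1 : s₁ = s := key hu hus
      have e2 : s₂ = s := key hv hvs
      subst e1; subst e2
      exact hnr (SimpleGraph.Reachable.refl _)
    · have e1 : s₁ = a := key hu hua
      have e2 : s₂ = b := key hv hvb
      subst e1; subst e2
      exact hnr (SimpleGraph.Adj.reachable (by exact hab))
  rw [TreeCutDecomp.crossNum, h0, Set.ncard_empty]
  exact Nat.zero_le k

/-- For every graph `G`, `ecrw(G) ≤ tpw(G)`. -/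
theorem stmt_4 {V : Type u} [Fintype V] (G : SimpleGraph V) :
    ecrw G ≤ tpw G := by
  have hne : {a | ∃ D : TreeCutDecomp G, D.IsTreePartition ∧ D.ThickLE a}.Nonempty := by
    refine ⟨Fintype.card V, trivDecomp G, trivDecomp_isTreePartition G, fun t => ?_⟩
    simpa [trivDecomp] using (Set.ncard_univ V).le
  obtain ⟨D, hP, hT⟩ : ∃ D : TreeCutDecomp G, D.IsTreePartition ∧ D.ThickLE (tpw G) :=
    Nat.sInf_mem hne
  exact Nat.sInf_le ⟨D, hT, tpPartition_crossLE D hP _⟩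
end

section
/- If H is a subdivision of a graph G, then ecrw(G) ≤ 2·ecrw(H). -/
open SimpleGraph

universe u

/-- The graph obtained from `G` by subdividing the edge `uv`: the edge `uv` is removed
and a new vertex (`Fin.last n`) adjacent to exactly `u` and `v` is added. -/
def subdivideEdge {n : ℕ} (G : SimpleGraph (Fin n)) (u v : Fin n) : SimpleGraph (Fin (n + 1)) :=
  SimpleGraph.fromRel fun a b =>
    (∃ a' b' : Fin n, a = Fin.castSucc a' ∧ b = Fin.castSucc b' ∧ G.Adj a' b' ∧
      s(a', b') ≠ s(u, v))
    ∨ (a = Fin.last n ∧ (b = Fin.castSucc u ∨ b = Fin.castSucc v))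

/-- `IsSubdivision G H` : `H` is obtained from `G` by repeatedly subdividing edges. -/
inductive IsSubdivision : ∀ {m n : ℕ}, SimpleGraph (Fin m) → SimpleGraph (Fin n) → Prop
  | refl {n : ℕ} (G : SimpleGraph (Fin n)) : IsSubdivision G G
  | step {m n : ℕ} (G : SimpleGraph (Fin m)) (H : SimpleGraph (Fin n)) (u v : Fin n) :
      IsSubdivision G H → H.Adj u v → IsSubdivision G (subdivideEdge H u v)

/-! ### Auxiliary material -/

theorem IsSubdivision.card_le {m n : ℕ} {G : SimpleGraph (Fin m)} {H : SimpleGraph (Fin n)}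
    (h : IsSubdivision G H) : m ≤ n := by
  induction h with
  | refl => exact le_rfl
  | step G H u v hsub hadj ih => exact ih.trans (Nat.le_succ _)

namespace TreeCutDecomp

/-- Pull back a tree-cut decomposition along a map of vertex sets. -/
def pull {V W : Type u} {H : SimpleGraph W} (D : TreeCutDecomp H) (G : SimpleGraph V)
    (f : V → W) : TreeCutDecomp G where
  β := D.β
  fintypeβ := D.fintypeβ
  T := D.T
  isTree := D.isTree
  bag t := f ⁻¹' D.bag t
  disj := fun s t hst => (D.disj hst).preimage f
  covers v := D.covers (f v)

end TreeCutDecomp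

open TreeCutDecomp

theorem subdivideEdge_adj_castSucc {n : ℕ} (H : SimpleGraph (Fin n)) (u v a b : Fin n)
    (hab : H.Adj a b) (hne : s(a, b) ≠ s(u, v)) :
    (subdivideEdge H u v).Adj (Fin.castSucc a) (Fin.castSucc b) :=
  ⟨fun h => hab.ne (Fin.castSucc_injective n h),
    Or.inl (Or.inl ⟨a, b, rfl, rfl, hab, hne⟩)⟩

theorem subdivideEdge_adj_last {n : ℕ} (H : SimpleGraph (Fin n)) (u v x : Fin n)
    (hx : x = u ∨ x = v) : (subdivideEdge H u v).Adj (Fin.castSucc x) (Fin.last n) := by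
  refine ⟨(Fin.castSucc_lt_last x).ne, Or.inr (Or.inr ⟨rfl, ?_⟩)⟩
  rcases hx with rfl | rfl
  · exact Or.inl rfl
  · exact Or.inr rfl

theorem reach_split {β : Type*} (T : SimpleGraph β) {a b c : β} (h : ¬ T.Reachable a b) :
    ¬ T.Reachable a c ∨ ¬ T.Reachable b c := by
  by_contra hc
  push_neg at hc
  exact h (hc.1.trans hc.2.symm)

section Step

variable {n : ℕ} {H : SimpleGraph (Fin n)} {u v : Fin n}

/-- Old edges of `H` that cross in the pulled-back decomposition cross in the original. -/
theorem crosses_of_pull_crosses (D : TreeCutDecomp (subdivideEdge H u v)) (t : D.β)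
    {e : Sym2 (Fin n)} (hne : e ≠ s(u, v))
    (hc : (D.pull H Fin.castSucc).Crosses t e) :
    D.Crosses t (Sym2.map Fin.castSucc e) := by
  obtain ⟨hes, a, b, s₁, s₂, h₁, h₂, rfl, ha, hb, hr⟩ := hc
  rw [Sym2.map_pair_eq]
  exact ⟨(SimpleGraph.mem_edgeSet _).mpr
      (subdivideEdge_adj_castSucc H u v a b ((SimpleGraph.mem_edgeSet _).mp hes) hne),
    Fin.castSucc a, Fin.castSucc b, s₁, s₂, h₁, h₂, rfl, ha, hb, hr⟩

theorem special_crosses (D : TreeCutDecomp (subdivideEdge H u v)) (t : D.β)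
    (x : Fin n) (hx : x = u ∨ x = v) (s₁ s₃ : D.β) (h₁ : s₁ ≠ t) (h₃ : s₃ ≠ t)
    (hxb : Fin.castSucc x ∈ D.bag s₁) (hl : Fin.last n ∈ D.bag s₃)
    (hr : ¬ (D.T.induce {y | y ≠ t}).Reachable ⟨s₁, h₁⟩ ⟨s₃, h₃⟩) :
    D.Crosses t s(Fin.castSucc x, Fin.last n) :=
  ⟨(SimpleGraph.mem_edgeSet _).mpr (subdivideEdge_adj_last H u v x hx),
    Fin.castSucc x, Fin.last n, s₁, s₃, h₁, h₃, rfl, hxb, hl, hr⟩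

theorem last_not_mem_map (e : Sym2 (Fin n)) :
    Fin.last n ∉ Sym2.map Fin.castSucc e := by
  induction e using Sym2.ind with
  | _ a b =>
    rw [Sym2.map_pair_eq, Sym2.mem_iff]
    push_neg
    exact ⟨(Fin.castSucc_lt_last a).ne', (Fin.castSucc_lt_last b).ne'⟩

open scoped Classical in
/-- The key single-step estimate: un-subdividing one edge increases each crossing number
by at most the indicator of the new vertex lying in the bag. -/
theorem crossNum_pull_castSucc_le (huv : H.Adj u v)
    (D : TreeCutDecomp (subdivideEdge H u v)) (t : D.β) :
    (D.pull H Fin.castSucc).crossNum t ≤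
      D.crossNum t + (if Fin.last n ∈ D.bag t then 1 else 0) := by
  classical
  set S : Set (Sym2 (Fin n)) := {e | (D.pull H Fin.castSucc).Crosses t e} with hS
  set S' : Set (Sym2 (Fin (n + 1))) := {e | D.Crosses t e} with hS'
  show S.ncard ≤ S'.ncard + _
  by_cases hsp : (D.pull H Fin.castSucc).Crosses t s(u, v)
  · -- the subdivided edge crosses
    obtain ⟨hes, a, b, s₁, s₂, h₁, h₂, heq, ha, hb, hr⟩ := hsp
    obtain ⟨s₃, hs₃⟩ := D.covers (Fin.last n)
    by_cases hst : s₃ = t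
    · -- absorbed: the new vertex is in the bag at `t`
      rw [if_pos (hst ▸ hs₃)]
      have hsub : S ⊆ insert s(u, v) (S \ {s(u, v)}) := by
        intro e he
        by_cases h : e = s(u, v)
        · exact Or.inl h
        · exact Or.inr ⟨he, h⟩
      calc S.ncard ≤ (insert s(u, v) (S \ {s(u, v)})).ncard :=
              Set.ncard_le_ncard hsub (Set.toFinite _)
        _ ≤ (S \ {s(u, v)}).ncard + 1 := Set.ncard_insert_le _ _
        _ ≤ S'.ncard + 1 := by
            gcongr
            refine Set.ncard_le_ncard_of_injOn (Sym2.map Fin.castSucc) ?_ ?_ (Set.toFinite _)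
            · rintro e ⟨he, hne⟩
              exact crosses_of_pull_crosses D t hne he
            · exact (Sym2.map.injective (Fin.castSucc_injective n)).injOn
    · -- the new vertex is elsewhere: produce a special crossing edge containing `last n`
      have hne₃ : s₃ ≠ t := hst
      -- from `heq : s(u,v) = s(a,b)` extract positions
      have hcase : (a = u ∧ b = v) ∨ (a = v ∧ b = u) := by
        rw [Sym2.eq_iff] at heq
        tauto
      have hspecial : ∃ e₀ : Sym2 (Fin (n + 1)), D.Crosses t e₀ ∧ Fin.last n ∈ e₀ := by
        rcases reach_split _ hr with hna | hnb
        · -- ¬ Reach s₁ s₃ ; `a` sits in bag s₁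
          refine ⟨s(Fin.castSucc a, Fin.last n),
            special_crosses D t a ?_ s₁ s₃ h₁ hne₃ ha hs₃ hna, by simp⟩
          tauto
        · refine ⟨s(Fin.castSucc b, Fin.last n),
            special_crosses D t b ?_ s₂ s₃ h₂ hne₃ hb hs₃ hnb, by simp⟩
          tauto
      obtain ⟨e₀, he₀, hle₀⟩ := hspecial
      have : S.ncard ≤ S'.ncard := by
        refine Set.ncard_le_ncard_of_injOn
          (fun e => if e = s(u, v) then e₀ else Sym2.map Fin.castSucc e) ?_ ?_ (Set.toFinite _)
        · intro e he
          by_cases h : e = s(u, v)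
          · rw [if_pos h]; exact he₀
          · rw [if_neg h]; exact crosses_of_pull_crosses D t h he
        · intro e₁ he₁ e₂ he₂ h12
          dsimp only at h12
          by_cases hc₁ : e₁ = s(u, v) <;> by_cases hc₂ : e₂ = s(u, v)
          · rw [hc₁, hc₂]
          · rw [if_pos hc₁, if_neg hc₂] at h12
            exact absurd (h12 ▸ hle₀) (last_not_mem_map e₂)
          · rw [if_neg hc₁, if_pos hc₂] at h12
            exact absurd (h12.symm ▸ hle₀) (last_not_mem_map e₁)
          · rw [if_neg hc₁, if_neg hc₂] at h12
            exact Sym2.map.injective (Fin.castSucc_injective n) h12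
      exact this.trans (Nat.le_add_right _ _)
  · -- the subdivided edge does not cross
    have : S.ncard ≤ S'.ncard := by
      refine Set.ncard_le_ncard_of_injOn (Sym2.map Fin.castSucc) ?_ ?_ (Set.toFinite _)
      · intro e he
        have hne : e ≠ s(u, v) := fun h => hsp (h ▸ he)
        exact crosses_of_pull_crosses D t hne he
      · exact (Sym2.map.injective (Fin.castSucc_injective n)).injOn
    exact this.trans (Nat.le_add_right _ _)

end Step

open scoped Classical in
/-- Master lemma: pulling back a decomposition of a subdivision `H` to `G` increases
each crossing number by at most the number of subdivision vertices in the bag. -/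
theorem crossNum_pull_le {m n : ℕ} {G : SimpleGraph (Fin m)} {H : SimpleGraph (Fin n)}
    (h : IsSubdivision G H) :
    ∀ (hmn : m ≤ n) (D : TreeCutDecomp H) (t : D.β),
      (D.pull G (Fin.castLE hmn)).crossNum t ≤
        D.crossNum t + (D.bag t ∩ (Set.range (Fin.castLE hmn))ᶜ).ncard := by
  induction h with
  | refl G₀ =>
    intro hmn D t
    exact Nat.le_add_right (D.crossNum t) _
  | step G₀ H₀ u v hsub hadj ih =>
    intro hmn D t
    have hm : m ≤ _ := hsub.card_le
    let DH : TreeCutDecomp H₀ := D.pull H₀ Fin.castSucc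
    have hkey : DH.crossNum t ≤ D.crossNum t +
        (if Fin.last _ ∈ D.bag t then 1 else 0) := crossNum_pull_castSucc_le hadj D t
    have hib : (D.pull G₀ (Fin.castLE hmn)).crossNum t ≤
        DH.crossNum t + (DH.bag t ∩ (Set.range (Fin.castLE hm))ᶜ).ncard := ih hm DH t
    refine hib.trans ?_
    have hcount : (DH.bag t ∩ (Set.range (Fin.castLE hm))ᶜ).ncard +
        (if Fin.last _ ∈ D.bag t then 1 else 0) ≤
        (D.bag t ∩ (Set.range (Fin.castLE hmn))ᶜ).ncard := by
      classical
      have hmaps : ∀ a ∈ DH.bag t ∩ (Set.range (Fin.castLE hm))ᶜ,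
          Fin.castSucc a ∈ D.bag t ∩ (Set.range (Fin.castLE hmn))ᶜ := by
        rintro a ⟨ha, hna⟩
        refine ⟨ha, ?_⟩
        rintro ⟨b, hb⟩
        exact hna ⟨b, Fin.ext (by simpa using congrArg Fin.val hb)⟩
      have hinj : Set.InjOn (Fin.castSucc) (DH.bag t ∩ (Set.range (Fin.castLE hm))ᶜ) :=
        (Fin.castSucc_injective _).injOn
      by_cases hl : Fin.last _ ∈ D.bag t
      · rw [if_pos hl]
        have hlB : Fin.last _ ∈ D.bag t ∩ (Set.range (Fin.castLE hmn))ᶜ := by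
          refine ⟨hl, ?_⟩
          rintro ⟨b, hb⟩
          have := congrArg Fin.val hb
          simp only [Fin.coe_castLE, Fin.val_last] at this
          omega
        have h1 : (DH.bag t ∩ (Set.range (Fin.castLE hm))ᶜ).ncard ≤
            ((D.bag t ∩ (Set.range (Fin.castLE hmn))ᶜ) \ {Fin.last _}).ncard := by
          refine Set.ncard_le_ncard_of_injOn Fin.castSucc ?_ hinj (Set.toFinite _)
          intro a ha
          exact ⟨hmaps a ha, by simp [(Fin.castSucc_lt_last a).ne]⟩
        have h2 := Set.ncard_diff_singleton_add_one hlB (Set.toFinite _)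
        omega
      · rw [if_neg hl]
        simpa using Set.ncard_le_ncard_of_injOn Fin.castSucc hmaps hinj (Set.toFinite _)
    omega

/-- The trivial one-node decomposition. -/
def TreeCutDecomp.triv {V : Type u} (G : SimpleGraph V) : TreeCutDecomp G where
  β := Unit
  fintypeβ := inferInstance
  T := ⊥
  isTree := ⟨⟨fun a b => by cases a; cases b; exact Reachable.refl _⟩, isAcyclic_bot⟩
  bag _ := Set.univ
  disj := fun s t hst => absurd (Subsingleton.elim s t) hst
  covers v := ⟨(), Set.mem_univ v⟩

theorem triv_crossNum {V : Type u} (G : SimpleGraph V) (t : (TreeCutDecomp.triv G).β) :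
    (TreeCutDecomp.triv G).crossNum t = 0 := by
  have : {e : Sym2 V | (TreeCutDecomp.triv G).Crosses t e} = ∅ := by
    ext e
    simp only [Set.mem_setOf_eq, Set.mem_empty_iff_false, iff_false]
    rintro ⟨_, _, _, s₁, _, h₁, _, _⟩
    exact h₁ (Subsingleton.elim (α := Unit) s₁ t)
  rw [TreeCutDecomp.crossNum, this, Set.ncard_empty]

theorem ecrw_set_nonempty {n : ℕ} (H : SimpleGraph (Fin n)) :
    Set.Nonempty {k | ∃ D : TreeCutDecomp H, D.ThickLE k ∧ D.CrossLE k} := by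
  refine ⟨n, TreeCutDecomp.triv H, fun t => ?_, fun t => ?_⟩
  · simp [TreeCutDecomp.triv, Set.ncard_univ]
  · rw [triv_crossNum]
    exact Nat.zero_le _

/-- If `H` is a subdivision of `G`, then `ecrw(G) ≤ 2·ecrw(H)`. -/
theorem stmt_5 {m n : ℕ} (G : SimpleGraph (Fin m)) (H : SimpleGraph (Fin n))
    (h : IsSubdivision G H) : ecrw G ≤ 2 * ecrw H := by
  have hmn : m ≤ n := h.card_le
  obtain ⟨D, hth', hcr'⟩ := Nat.sInf_mem (ecrw_set_nonempty H)
  have hth : D.ThickLE (ecrw H) := hth'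
  have hcr : D.CrossLE (ecrw H) := hcr'
  apply Nat.sInf_le
  refine ⟨D.pull G (Fin.castLE hmn), fun t => ?_, fun t => ?_⟩
  · -- thickness
    have : ((Fin.castLE hmn) ⁻¹' D.bag t).ncard ≤ (D.bag t).ncard :=
      Set.ncard_le_ncard_of_injOn (Fin.castLE hmn) (fun a ha => ha)
        ((Fin.castLE_injective hmn).injOn) (Set.toFinite _)
    calc ((D.pull G (Fin.castLE hmn)).bag t).ncard ≤ (D.bag t).ncard := this
      _ ≤ ecrw H := hth t
      _ ≤ 2 * ecrw H := by omega
  · -- crossing number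
    have h1 := crossNum_pull_le h hmn D t
    have h2 : (D.bag t ∩ (Set.range (Fin.castLE hmn))ᶜ).ncard ≤ (D.bag t).ncard :=
      Set.ncard_le_ncard Set.inter_subset_left (Set.toFinite _)
    have h3 := hcr t
    have h4 := hth t
    omega
end

section
/- For all positive integers n and k with n ≥ 3, the graph S_{3,n} (the star K_{1,n} with each edge replaced by 3 internally vertex-disjoint paths of length 2) has 1-edge-crossing width at most 2. -/
open SimpleGraph

universe u

/-- The graph `S_{k,n}`: the star `K_{1,n}` with each edge replaced by `k` internally
vertex-disjoint paths of length 2. `Sum.inl ()` is the center `u_0`,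
`Sum.inr (Sum.inl i)` is `u_i` (`i ∈ [n]`), and `Sum.inr (Sum.inr (i, j))` is `v_{i,j}`,
adjacent to `u_0` and `u_i`. -/
def starSubdiv (k n : ℕ) : SimpleGraph (Unit ⊕ (Fin n ⊕ (Fin n × Fin k))) :=
  SimpleGraph.fromRel fun x y =>
    match x, y with
    | Sum.inl _, Sum.inr (Sum.inr _) => True
    | Sum.inr (Sum.inl i), Sum.inr (Sum.inr (a, _)) => i = a
    | _, _ => False

abbrev V (n : ℕ) := Unit ⊕ (Fin n ⊕ (Fin n × Fin 3))
variable {n : ℕ}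
def c : V n := Sum.inl ()
def U (i : Fin n) : V n := Sum.inr (Sum.inl i)
def W (i : Fin n) (j : Fin 3) : V n := Sum.inr (Sum.inr (i, j))

def T (n : ℕ) : SimpleGraph (V n) :=
  SimpleGraph.fromRel fun x y =>
    match x, y with
    | Sum.inl _, Sum.inr (Sum.inr (_, j)) => j = 0
    | Sum.inr (Sum.inl i), Sum.inr (Sum.inr (a, b)) => i = a ∧ (b = 0 ∨ b = 1)
    | Sum.inr (Sum.inr (a, b)), Sum.inr (Sum.inr (a', b')) => a = a' ∧ b = 1 ∧ b' = 2
    | _, _ => False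

lemma fin3 (b : Fin 3) : b = 0 ∨ b = 1 ∨ b = 2 := by omega

lemma T_adj_elim {x y : V n} (h : (T n).Adj x y) :
    ∃ i : Fin n,
      (x = c ∧ y = W i 0) ∨ (y = c ∧ x = W i 0) ∨
      (x = W i 0 ∧ y = U i) ∨ (y = W i 0 ∧ x = U i) ∨
      (x = U i ∧ y = W i 1) ∨ (y = U i ∧ x = W i 1) ∨
      (x = W i 1 ∧ y = W i 2) ∨ (y = W i 1 ∧ x = W i 2) := by
  rw [T, fromRel_adj] at h
  obtain ⟨hne, h⟩ := h
  rcases x with _ | x | ⟨a, b⟩ <;> rcases y with _ | y | ⟨a', b'⟩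
  · exact ((h.elim id id : False)).elim
  · exact ((h.elim id id : False)).elim
  · -- c vs W a' b'
    refine ⟨a', ?_⟩
    rcases h with h | h
    · exact Or.inl ⟨rfl, by simp [W, h]⟩
    · exact (h : False).elim
  · exact ((h.elim id id : False)).elim
  · exact ((h.elim id id : False)).elim
  · -- U x vs W a' b'
    rcases h with ⟨rfl, h | h⟩ | h
    · exact ⟨x, Or.inr (Or.inr (Or.inr (Or.inl ⟨by simp [W, h], rfl⟩)))⟩
    · exact ⟨x, Or.inr (Or.inr (Or.inr (Or.inr (Or.inl ⟨rfl, by simp [W, h]⟩))))⟩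
    · exact (h : False).elim
  · -- W a b vs c
    rcases h with h | h
    · exact (h : False).elim
    · exact ⟨a, Or.inr (Or.inl ⟨rfl, by simp [W, h]⟩)⟩
  · -- W a b vs U y
    rcases h with h | ⟨rfl, h | h⟩
    · exact (h : False).elim
    · exact ⟨y, Or.inr (Or.inr (Or.inl ⟨by simp [W, h], rfl⟩))⟩
    · exact ⟨y, Or.inr (Or.inr (Or.inr (Or.inr (Or.inr (Or.inl ⟨rfl, by simp [W, h]⟩)))))⟩
  · -- W a b vs W a' b'
    rcases h with ⟨rfl, rfl, rfl⟩ | ⟨rfl, rfl, rfl⟩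
    · exact ⟨a, Or.inr (Or.inr (Or.inr (Or.inr (Or.inr (Or.inr (Or.inl ⟨rfl, rfl⟩))))))⟩
    · exact ⟨a', Or.inr (Or.inr (Or.inr (Or.inr (Or.inr (Or.inr (Or.inr ⟨rfl, rfl⟩))))))⟩

/-! ### basic adjacencies and inequalities -/

lemma adj_cW0 (i : Fin n) : (T n).Adj c (W i 0) := by
  rw [T, fromRel_adj]
  exact ⟨by simp [c, W], Or.inl rfl⟩

lemma adj_W0U (i : Fin n) : (T n).Adj (W i 0) (U i) := by
  rw [T, fromRel_adj]
  exact ⟨by simp [U, W], Or.inr ⟨rfl, Or.inl rfl⟩⟩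

lemma adj_UW1 (i : Fin n) : (T n).Adj (U i) (W i 1) := by
  rw [T, fromRel_adj]
  exact ⟨by simp [U, W], Or.inl ⟨rfl, Or.inr rfl⟩⟩

lemma adj_W1W2 (i : Fin n) : (T n).Adj (W i 1) (W i 2) := by
  rw [T, fromRel_adj]
  refine ⟨by simp [W], Or.inl ⟨rfl, rfl, rfl⟩⟩

@[simp] lemma c_ne_U (i : Fin n) : (c : V n) ≠ U i := by simp [c, U]
@[simp] lemma c_ne_W (i : Fin n) (b : Fin 3) : (c : V n) ≠ W i b := by simp [c, W]
@[simp] lemma U_ne_c (i : Fin n) : (U i : V n) ≠ c := by simp [c, U]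
@[simp] lemma W_ne_c (i : Fin n) (b : Fin 3) : (W i b : V n) ≠ c := by simp [c, W]
@[simp] lemma U_ne_W (i j : Fin n) (b : Fin 3) : (U i : V n) ≠ W j b := by simp [U, W]
@[simp] lemma W_ne_U (i j : Fin n) (b : Fin 3) : (W j b : V n) ≠ U i := by simp [U, W]
@[simp] lemma U_inj {i j : Fin n} : (U i : V n) = U j ↔ i = j := by simp [U]
@[simp] lemma W_inj {i j : Fin n} {b d : Fin 3} : (W i b : V n) = W j d ↔ i = j ∧ b = d := by
  simp [W, Prod.ext_iff]

/-! ### invariant-set machinery -/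

lemma walk_mem {α : Type*} {G : SimpleGraph α} {S : Set α}
    (h : ∀ a b, G.Adj a b → (a ∈ S ↔ b ∈ S)) :
    ∀ {x y : α}, G.Walk x y → x ∈ S → y ∈ S
  | _, _, SimpleGraph.Walk.nil, hx => hx
  | _, _, SimpleGraph.Walk.cons ha p, hx => walk_mem h p ((h _ _ ha).mp hx)

lemma not_reachable_of_invariant {α : Type*} {G : SimpleGraph α} {S : Set α}
    (h : ∀ a b, G.Adj a b → (a ∈ S ↔ b ∈ S)) {x y : α} (hx : x ∉ S) (hy : y ∈ S) :
    ¬ G.Reachable x y := by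
  rintro ⟨w⟩
  exact hx (walk_mem h w.reverse hy)

lemma bridge_of_invariant {α : Type*} {G : SimpleGraph α} {x y : α} (hadj : G.Adj x y)
    (S : Set α) (hx : x ∉ S) (hy : y ∈ S)
    (h : ∀ a b, (G \ SimpleGraph.fromEdgeSet {s(x, y)}).Adj a b → (a ∈ S ↔ b ∈ S)) :
    G.IsBridge s(x, y) := by
  rw [isBridge_iff]
  refine fun hr => (not_reachable_of_invariant h hx hy) hr

/-! ### the four bridge types -/

def branchSet (i : Fin n) : Set (V n) := {x | x = U i ∨ ∃ b, x = W i b}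
def tail1 (i : Fin n) : Set (V n) := {x | x = U i ∨ x = W i 1 ∨ x = W i 2}
def tail2 (i : Fin n) : Set (V n) := {x | x = W i 1 ∨ x = W i 2}
def tail3 (i : Fin n) : Set (V n) := {x | x = W i 2}

lemma del_adj {e : Sym2 (V n)} {a b : V n}
    (hab : ((T n) \ SimpleGraph.fromEdgeSet {e}).Adj a b) :
    (T n).Adj a b ∧ s(a, b) ≠ e := by
  rw [sdiff_adj, fromEdgeSet_adj] at hab
  obtain ⟨hT, hne⟩ := hab
  exact ⟨hT, fun hh => hne ⟨hh, hT.ne⟩⟩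

lemma bridge1 (i : Fin n) : (T n).IsBridge s(c, W i 0) := by
  refine bridge_of_invariant (adj_cW0 i) (branchSet i) (by simp [branchSet]) (by simp [branchSet]) ?_
  intro a b hab
  obtain ⟨hT, hne⟩ := del_adj hab
  rcases T_adj_elim hT with ⟨j, ⟨rfl, rfl⟩ | ⟨rfl, rfl⟩ | ⟨rfl, rfl⟩ | ⟨rfl, rfl⟩ |
    ⟨rfl, rfl⟩ | ⟨rfl, rfl⟩ | ⟨rfl, rfl⟩ | ⟨rfl, rfl⟩⟩ <;>
    simp_all [branchSet, Sym2.eq_iff] <;> tauto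

lemma bridge2 (i : Fin n) : (T n).IsBridge s(W i 0, U i) := by
  refine bridge_of_invariant (adj_W0U i) (tail1 i) (by simp [tail1]) (by simp [tail1]) ?_
  intro a b hab
  obtain ⟨hT, hne⟩ := del_adj hab
  rcases T_adj_elim hT with ⟨j, ⟨rfl, rfl⟩ | ⟨rfl, rfl⟩ | ⟨rfl, rfl⟩ | ⟨rfl, rfl⟩ |
    ⟨rfl, rfl⟩ | ⟨rfl, rfl⟩ | ⟨rfl, rfl⟩ | ⟨rfl, rfl⟩⟩ <;>
    simp_all [tail1, Sym2.eq_iff] <;> tauto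

lemma bridge3 (i : Fin n) : (T n).IsBridge s(U i, W i 1) := by
  refine bridge_of_invariant (adj_UW1 i) (tail2 i) (by simp [tail2]) (by simp [tail2]) ?_
  intro a b hab
  obtain ⟨hT, hne⟩ := del_adj hab
  rcases T_adj_elim hT with ⟨j, ⟨rfl, rfl⟩ | ⟨rfl, rfl⟩ | ⟨rfl, rfl⟩ | ⟨rfl, rfl⟩ |
    ⟨rfl, rfl⟩ | ⟨rfl, rfl⟩ | ⟨rfl, rfl⟩ | ⟨rfl, rfl⟩⟩ <;>
    simp_all [tail2, Sym2.eq_iff] <;> tauto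

lemma bridge4 (i : Fin n) : (T n).IsBridge s(W i 1, W i 2) := by
  refine bridge_of_invariant (adj_W1W2 i) (tail3 i) (by simp [tail3]) (by simp [tail3]) ?_
  intro a b hab
  obtain ⟨hT, hne⟩ := del_adj hab
  rcases T_adj_elim hT with ⟨j, ⟨rfl, rfl⟩ | ⟨rfl, rfl⟩ | ⟨rfl, rfl⟩ | ⟨rfl, rfl⟩ |
    ⟨rfl, rfl⟩ | ⟨rfl, rfl⟩ | ⟨rfl, rfl⟩ | ⟨rfl, rfl⟩⟩ <;>
    simp_all [tail3, Sym2.eq_iff] <;> tauto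

lemma T_acyclic : (T n).IsAcyclic := by
  rw [isAcyclic_iff_forall_adj_isBridge]
  intro v w hadj
  rcases T_adj_elim hadj with ⟨j, ⟨rfl, rfl⟩ | ⟨rfl, rfl⟩ | ⟨rfl, rfl⟩ | ⟨rfl, rfl⟩ |
    ⟨rfl, rfl⟩ | ⟨rfl, rfl⟩ | ⟨rfl, rfl⟩ | ⟨rfl, rfl⟩⟩
  · exact bridge1 j
  · rw [Sym2.eq_swap]; exact bridge1 j
  · exact bridge2 j
  · rw [Sym2.eq_swap]; exact bridge2 j
  · exact bridge3 j
  · rw [Sym2.eq_swap]; exact bridge3 j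
  · exact bridge4 j
  · rw [Sym2.eq_swap]; exact bridge4 j

lemma reach_c (x : V n) : (T n).Reachable x c := by
  rcases x with u | i | ⟨a, b⟩
  · cases u; exact SimpleGraph.Reachable.refl _
  · exact ((adj_W0U i).symm.reachable).trans ((adj_cW0 i).symm.reachable)
  · rcases fin3 b with rfl | rfl | rfl
    · exact (adj_cW0 a).symm.reachable
    · exact ((adj_UW1 a).symm.reachable).trans
        (((adj_W0U a).symm.reachable).trans ((adj_cW0 a).symm.reachable))
    · exact ((adj_W1W2 a).symm.reachable).trans
        (((adj_UW1 a).symm.reachable).trans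
          (((adj_W0U a).symm.reachable).trans ((adj_cW0 a).symm.reachable)))

lemma T_connected : (T n).Connected := by
  rw [connected_iff]
  exact ⟨fun x y => (reach_c x).trans (reach_c y).symm, ⟨c⟩⟩

/-! ### the decomposition -/

def Dec (n : ℕ) : TreeCutDecomp (starSubdiv 3 n) where
  β := V n
  fintypeβ := inferInstance
  T := T n
  isTree := ⟨T_connected, T_acyclic⟩
  bag := fun t => {t}
  disj := by intro s t hst; exact Set.disjoint_singleton.mpr hst
  covers := fun v => ⟨v, rfl⟩

abbrev TT (n : ℕ) (t : V n) := (T n).induce {z | z ≠ t}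

lemma rch_adj {t x y : V n} (h : (T n).Adj x y) (hx : x ≠ t) (hy : y ≠ t) :
    (TT n t).Reachable ⟨x, hx⟩ ⟨y, hy⟩ :=
  SimpleGraph.Adj.reachable (by exact h)

section rch
variable {t : V n} (a : Fin n)

lemma rch_cW0 (hc : c ≠ t) (h0 : W a 0 ≠ t) :
    (TT n t).Reachable ⟨c, hc⟩ ⟨W a 0, h0⟩ := rch_adj (adj_cW0 a) hc h0

lemma rch_cU (hc : c ≠ t) (h0 : W a 0 ≠ t) (hU : U a ≠ t) :
    (TT n t).Reachable ⟨c, hc⟩ ⟨U a, hU⟩ :=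
  (rch_cW0 a hc h0).trans (rch_adj (adj_W0U a) h0 hU)

lemma rch_cW1 (hc : c ≠ t) (h0 : W a 0 ≠ t) (hU : U a ≠ t) (h1 : W a 1 ≠ t) :
    (TT n t).Reachable ⟨c, hc⟩ ⟨W a 1, h1⟩ :=
  (rch_cU a hc h0 hU).trans (rch_adj (adj_UW1 a) hU h1)

lemma rch_cW2 (hc : c ≠ t) (h0 : W a 0 ≠ t) (hU : U a ≠ t) (h1 : W a 1 ≠ t) (h2 : W a 2 ≠ t) :
    (TT n t).Reachable ⟨c, hc⟩ ⟨W a 2, h2⟩ :=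
  (rch_cW1 a hc h0 hU h1).trans (rch_adj (adj_W1W2 a) h1 h2)

lemma rch_UW0 (hU : U a ≠ t) (h0 : W a 0 ≠ t) :
    (TT n t).Reachable ⟨U a, hU⟩ ⟨W a 0, h0⟩ := rch_adj (adj_W0U a).symm hU h0

lemma rch_UW1 (hU : U a ≠ t) (h1 : W a 1 ≠ t) :
    (TT n t).Reachable ⟨U a, hU⟩ ⟨W a 1, h1⟩ := rch_adj (adj_UW1 a) hU h1

lemma rch_UW2 (hU : U a ≠ t) (h1 : W a 1 ≠ t) (h2 : W a 2 ≠ t) :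
    (TT n t).Reachable ⟨U a, hU⟩ ⟨W a 2, h2⟩ :=
  (rch_UW1 a hU h1).trans (rch_adj (adj_W1W2 a) h1 h2)

end rch

lemma crosses_extract {t : V n} {e : Sym2 (V n)} (h : (Dec n).Crosses t e) :
    ∃ (x y : V n) (hx : x ≠ t) (hy : y ≠ t) (a : Fin n) (b : Fin 3),
      e = s(x, y) ∧ y = W a b ∧ (x = c ∨ x = U a) ∧
      ¬ (TT n t).Reachable ⟨x, hx⟩ ⟨y, hy⟩ := by
  obtain ⟨he, u, v, s₁, s₂, h₁, h₂, heq, hu, hv, hnr⟩ := h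
  have hu' : u = s₁ := hu
  have hv' : v = s₂ := hv
  subst hu' hv'
  rw [heq, SimpleGraph.mem_edgeSet] at he
  rw [starSubdiv, fromRel_adj] at he
  obtain ⟨hne, hr⟩ := he
  rcases u with _ | i | ⟨a, b⟩ <;> rcases v with _ | j | ⟨a', b'⟩
  · exact ((hr.elim id id : False)).elim
  · exact ((hr.elim id id : False)).elim
  · -- c vs W a' b'
    exact ⟨c, W a' b', h₁, h₂, a', b', heq, rfl, Or.inl rfl, hnr⟩
  · exact ((hr.elim id id : False)).elim
  · exact ((hr.elim id id : False)).elim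
  · -- U i vs W a' b'
    rcases hr with h | h
    · obtain rfl : i = a' := h
      exact ⟨U i, W i b', h₁, h₂, i, b', heq, rfl, Or.inr rfl, hnr⟩
    · exact (h : False).elim
  · -- W a b vs c
    refine ⟨c, W a b, h₂, h₁, a, b, ?_, rfl, Or.inl rfl, fun hrr => hnr hrr.symm⟩
    rw [heq, Sym2.eq_swap]; rfl
  · -- W a b vs U j
    rcases hr with h | h
    · exact (h : False).elim
    · obtain rfl : j = a := h
      refine ⟨U j, W j b, h₂, h₁, j, b, ?_, rfl, Or.inr rfl, fun hrr => hnr hrr.symm⟩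
      rw [heq, Sym2.eq_swap]; rfl
  · exact ((hr.elim id id : False)).elim

lemma ncard_le_two_of_subset_pair {α : Type*} {s : Set α} {a b : α} (h : s ⊆ {a, b}) :
    s.ncard ≤ 2 := by
  refine le_trans (Set.ncard_le_ncard h ((Set.finite_singleton b).insert a)) ?_
  refine le_trans (Set.ncard_insert_le _ _) ?_
  simp


@[simp] lemma f01 : (0 : Fin 3) ≠ 1 := by decide
@[simp] lemma f02 : (0 : Fin 3) ≠ 2 := by decide
@[simp] lemma f10 : (1 : Fin 3) ≠ 0 := by decide
@[simp] lemma f12 : (1 : Fin 3) ≠ 2 := by decide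
@[simp] lemma f20 : (2 : Fin 3) ≠ 0 := by decide
@[simp] lemma f21 : (2 : Fin 3) ≠ 1 := by decide

lemma cross_bound (t : V n) : (Dec n).crossNum t ≤ 2 := by
  rcases t with u | i | ⟨i, j⟩
  · -- t = c : no crossings
    cases u
    apply ncard_le_two_of_subset_pair (a := s(c, c)) (b := s(c, c))
    intro e he
    obtain ⟨x, y, hx, hy, a, b, rfl, rfl, hxor, hnr⟩ := crosses_extract he
    rcases hxor with rfl | rfl
    · exact absurd rfl hx
    · rcases fin3 b with rfl | rfl | rfl
      · exact (hnr (rch_UW0 a hx hy)).elim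
      · exact (hnr (rch_UW1 a hx hy)).elim
      · exact (hnr (rch_UW2 a hx (by simp [c, U, W]) hy)).elim
  · -- t = U i
    apply ncard_le_two_of_subset_pair (a := s(c, W i 1)) (b := s(c, W i 2))
    intro e he
    obtain ⟨x, y, hx, hy, a, b, rfl, rfl, hxor, hnr⟩ := crosses_extract he
    rcases hxor with rfl | rfl
    · rcases fin3 b with rfl | rfl | rfl
      · exact (hnr (rch_cW0 a hx hy)).elim
      · by_cases hai : a = i
        · subst hai; exact Set.mem_insert _ _
        · exact (hnr (rch_cW1 a hx (by simp [c, U, W]) (by simp [c, U, W, hai]) hy)).elim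
      · by_cases hai : a = i
        · subst hai; exact Set.mem_insert_of_mem _ rfl
        · exact (hnr (rch_cW2 a hx (by simp [c, U, W]) (by simp [c, U, W, hai]) (by simp [c, U, W]) hy)).elim
    · rcases fin3 b with rfl | rfl | rfl
      · exact (hnr (rch_UW0 a hx hy)).elim
      · exact (hnr (rch_UW1 a hx hy)).elim
      · exact (hnr (rch_UW2 a hx (by simp [c, U, W]) hy)).elim
  · rcases fin3 j with rfl | rfl | rfl
    · -- t = W i 0
      apply ncard_le_two_of_subset_pair (a := s(c, W i 1)) (b := s(c, W i 2))
      intro e he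
      obtain ⟨x, y, hx, hy, a, b, rfl, rfl, hxor, hnr⟩ := crosses_extract he
      rcases hxor with rfl | rfl
      · rcases fin3 b with rfl | rfl | rfl
        · exact (hnr (rch_cW0 a hx hy)).elim
        · by_cases hai : a = i
          · subst hai; exact Set.mem_insert _ _
          · exact (hnr (rch_cW1 a hx (by simp [c, U, W, hai]) (by simp [c, U, W]) hy)).elim
        · by_cases hai : a = i
          · subst hai; exact Set.mem_insert_of_mem _ rfl
          · exact (hnr (rch_cW2 a hx (by simp [c, U, W, hai]) (by simp [c, U, W]) (by simp [c, U, W]) hy)).elim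
      · rcases fin3 b with rfl | rfl | rfl
        · exact (hnr (rch_UW0 a hx hy)).elim
        · exact (hnr (rch_UW1 a hx hy)).elim
        · exact (hnr (rch_UW2 a hx (by simp [c, U, W]) hy)).elim
    · -- t = W i 1
      apply ncard_le_two_of_subset_pair (a := s(c, W i 2)) (b := s(U i, W i 2))
      intro e he
      obtain ⟨x, y, hx, hy, a, b, rfl, rfl, hxor, hnr⟩ := crosses_extract he
      rcases hxor with rfl | rfl
      · rcases fin3 b with rfl | rfl | rfl
        · exact (hnr (rch_cW0 a hx hy)).elim
        · exact (hnr (rch_cW1 a hx (by simp [c, U, W]) (by simp [c, U, W]) hy)).elim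
        · by_cases hai : a = i
          · subst hai; exact Set.mem_insert _ _
          · exact (hnr (rch_cW2 a hx (by simp [c, U, W]) (by simp [c, U, W]) (by simp [c, U, W, hai]) hy)).elim
      · rcases fin3 b with rfl | rfl | rfl
        · exact (hnr (rch_UW0 a hx hy)).elim
        · exact (hnr (rch_UW1 a hx hy)).elim
        · by_cases hai : a = i
          · subst hai; exact Set.mem_insert_of_mem _ rfl
          · exact (hnr (rch_UW2 a hx (by simp [c, U, W, hai]) hy)).elim
    · -- t = W i 2
      apply ncard_le_two_of_subset_pair (a := s(c, c)) (b := s(c, c))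
      intro e he
      obtain ⟨x, y, hx, hy, a, b, rfl, rfl, hxor, hnr⟩ := crosses_extract he
      rcases hxor with rfl | rfl
      · rcases fin3 b with rfl | rfl | rfl
        · exact (hnr (rch_cW0 a hx hy)).elim
        · exact (hnr (rch_cW1 a hx (by simp [c, U, W]) (by simp [c, U, W]) hy)).elim
        · exact (hnr (rch_cW2 a hx (by simp [c, U, W]) (by simp [c, U, W]) (by simp [c, U, W]) hy)).elim
      · rcases fin3 b with rfl | rfl | rfl
        · exact (hnr (rch_UW0 a hx hy)).elim
        · exact (hnr (rch_UW1 a hx hy)).elim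
        · exact (hnr (rch_UW2 a hx (by simp [c, U, W]) hy)).elim

/-- For every positive integer `n` with `n ≥ 3`, the graph `S_{3,n}` has 1-edge-crossing
width at most 2. -/
theorem stmt_9 (n : ℕ) (hn : 3 ≤ n) : ecrwA (starSubdiv 3 n) 1 ≤ 2 := by
  apply Nat.sInf_le
  exact ⟨Dec n, fun t => by simp [Dec]; exact Set.subsingleton_singleton, fun t => cross_bound t⟩
end
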